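/- Let E be a complex inner product space with inner product ⟪·,·⟫ (conjugate-linear in the first argument), let U : E ≃ₗᵢ[ℂ] E be a linear isometric equivalence (Floquet propagator acting on observables), let τ > 0, ω ∈ ℝ, and let Q : Fin n → E satisfy U (Q j) = exp(iωτ) • Q j for all j, with invertible Gram matrix G j l = ⟪Q j, Q l⟫. Let A ∈ E and set v j = ⟪Q j, A⟫. Then for every integer L ≥ 1, the number (1/L²)∑_{l₁=0}^{L−1}∑_{l₂=0}^{L−1} exp(iωτ(l₁−l₂))·⟪U^{l₁}A, U^{l₂}A⟫ is real and nonnegative, star(v) ⬝ᵥ (G⁻¹ *ᵥ v) is real and nonnegative, and (1/L²)∑_{l₁,l₂} exp(iωτ(l₁−l₂))·⟪U^{l₁}A, U^{l₂}A⟫ ≥ star(v) ⬝ᵥ (G⁻¹ *ᵥ v). (Discrete-time/Floquet Mazur-type lower bound on the Fourier component at frequency ω of the stroboscopic autocorrelation in terms of dynamical symmetries Q j satisfying the Floquet eigenoperator condition.) -/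

import Mathlib

open Matrix

/-- **Discrete-time (Floquet) Mazur-type bound**: for a linear isometric equivalence
`U` of a complex inner ℂ product space (the stroboscopic Heisenberg evolution over one
driving period `τ`) and dynamical symmetries `Q j` with `U (Q j) = e^{iωτ} Q j` and
invertible Gram matrix `G`, the Fourier component
`(1/L²)∑_{l₁,l₂=0}^{L−1} e^{iωτ(l₁−l₂)} ⟪U^{l₁} A, U^{l₂} A⟫` is real and nonnegative,
`v† G⁻¹ v` (with `v j = ⟪Q j, A⟫`) is real and nonnegative, and the former dominates
the latter. -/
theorem floquet_mazur_bound
    (E : Type*) [NormedAddCommGroup E] [InnerProductSpace ℂ E]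
    (U : E ≃ₗᵢ[ℂ] E) (τ : ℝ) (hτ : 0 < τ) (ω : ℝ)
    (n : ℕ) (Q : Fin n → E)
    (hQ : ∀ j : Fin n, U (Q j) = Complex.exp (Complex.I * ω * τ) • Q j)
    (G : Matrix (Fin n) (Fin n) ℂ)
    (hG : G = Matrix.of fun j l => (inner ℂ (Q j) (Q l) : ℂ))
    (hGinv : IsUnit G.det)
    (A : E) (v : Fin n → ℂ) (hv : v = fun j => (inner ℂ (Q j) A : ℂ))
    (L : ℕ) (hL : 1 ≤ L) :
    (((L : ℂ) ^ 2)⁻¹ * ∑ l₁ ∈ Finset.range L, ∑ l₂ ∈ Finset.range L,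
        Complex.exp (Complex.I * ω * τ * ((l₁ : ℂ) - (l₂ : ℂ))) *
          (inner ℂ ((U ^ l₁) A) ((U ^ l₂) A) : ℂ)).im = 0 ∧
    0 ≤ (((L : ℂ) ^ 2)⁻¹ * ∑ l₁ ∈ Finset.range L, ∑ l₂ ∈ Finset.range L,
        Complex.exp (Complex.I * ω * τ * ((l₁ : ℂ) - (l₂ : ℂ))) *
          (inner ℂ ((U ^ l₁) A) ((U ^ l₂) A) : ℂ)).re ∧
    (star v ⬝ᵥ (G⁻¹ *ᵥ v)).im = 0 ∧
    0 ≤ (star v ⬝ᵥ (G⁻¹ *ᵥ v)).re ∧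
    (star v ⬝ᵥ (G⁻¹ *ᵥ v)).re ≤
      (((L : ℂ) ^ 2)⁻¹ * ∑ l₁ ∈ Finset.range L, ∑ l₂ ∈ Finset.range L,
        Complex.exp (Complex.I * ω * τ * ((l₁ : ℂ) - (l₂ : ℂ))) *
          (inner ℂ ((U ^ l₁) A) ((U ^ l₂) A) : ℂ)).re := by
  classical
  set c : ℂ := Complex.exp (Complex.I * ω * τ) with hc
  have hconj : (starRingEnd ℂ) c = Complex.exp (-(Complex.I * ω * τ)) := by
    rw [hc, ← Complex.exp_conj]
    congr 1
    simp [Complex.conj_I]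
    try ring
  -- eigen relation for powers
  have hpow : ∀ (l : ℕ) (j : Fin n), (U ^ l) (Q j) = c ^ l • Q j := by
    intro l j
    induction l with
    | zero => simp
    | succ l ih =>
      rw [pow_succ, LinearIsometryEquiv.coe_mul, Function.comp_apply]
      show (U ^ l) (U (Q j)) = _
      rw [hQ j, LinearIsometryEquiv.map_smul, ih, smul_smul, ← pow_succ']
  set w : ℕ → E := fun l => ((starRingEnd ℂ) c) ^ l • (U ^ l) A with hw
  -- inner ℂ products of the w's give the exponential-weighted correlations
  have hterm : ∀ l₁ l₂ : ℕ,
      (inner ℂ (w l₁) (w l₂) : ℂ) =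
      Complex.exp (Complex.I * ω * τ * ((l₁ : ℂ) - (l₂ : ℂ))) *
        (inner ℂ ((U ^ l₁) A) ((U ^ l₂) A) : ℂ) := by
    intro l₁ l₂
    rw [hw]
    simp only [inner_smul_left, inner_smul_right, map_pow, RingHom.id_apply,
      starRingEnd_self_apply, Complex.conj_conj]
    rw [hconj]
    rw [← Complex.exp_nat_mul, ← Complex.exp_nat_mul, ← mul_assoc, ← Complex.exp_add]
    congr 2
    push_cast
    ring
  -- key overlap identity
  have hQw : ∀ (j : Fin n) (l : ℕ), (inner ℂ (Q j) (w l) : ℂ) = v j := by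
    intro j l
    have h1 : (inner ℂ ((U ^ l) (Q j)) ((U ^ l) A) : ℂ) = inner ℂ (Q j) A :=
      LinearIsometryEquiv.inner_map_map (U ^ l) (Q j) A
    rw [hpow, inner_smul_left, map_pow] at h1
    rw [hw]
    simp only [inner_smul_right]
    rw [h1, hv]
  set S : E := ∑ l ∈ Finset.range L, w l with hS
  have hLne : (L : ℂ) ≠ 0 := Nat.cast_ne_zero.mpr (by omega)
  set x : E := (L : ℂ)⁻¹ • S with hx
  have hsum : ∑ l₁ ∈ Finset.range L, ∑ l₂ ∈ Finset.range L,
      Complex.exp (Complex.I * ω * τ * ((l₁ : ℂ) - (l₂ : ℂ))) *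
        (inner ℂ ((U ^ l₁) A) ((U ^ l₂) A) : ℂ) = (inner ℂ S S : ℂ) := by
    rw [hS, sum_inner]
    refine Finset.sum_congr rfl fun l₁ _ => ?_
    rw [inner_sum]
    exact Finset.sum_congr rfl fun l₂ _ => (hterm l₁ l₂).symm
  have hxx : ((L : ℂ) ^ 2)⁻¹ * (inner ℂ S S : ℂ) = (inner ℂ x x : ℂ) := by
    rw [hx, inner_smul_left, inner_smul_right, map_inv₀, Complex.conj_natCast]
    ring
  have hmain : ((L : ℂ) ^ 2)⁻¹ * ∑ l₁ ∈ Finset.range L, ∑ l₂ ∈ Finset.range L,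
      Complex.exp (Complex.I * ω * τ * ((l₁ : ℂ) - (l₂ : ℂ))) *
        (inner ℂ ((U ^ l₁) A) ((U ^ l₂) A) : ℂ) = ((‖x‖ ^ 2 : ℝ) : ℂ) := by
    rw [hsum, hxx, inner_self_eq_norm_sq_to_K]
    norm_cast
  have hQx : ∀ j : Fin n, (inner ℂ (Q j) x : ℂ) = v j := by
    intro j
    rw [hx, inner_smul_right, hS, inner_sum]
    simp only [hQw]
    rw [Finset.sum_const, Finset.card_range, nsmul_eq_mul]
    field_simp
  set a : Fin n → ℂ := G⁻¹ *ᵥ v with ha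
  set y : E := ∑ j, a j • Q j with hy
  have hGa : G *ᵥ a = v := by
    rw [ha, mulVec_mulVec, Matrix.mul_nonsing_inv G hGinv, one_mulVec]
  have hQy : ∀ j : Fin n, (inner ℂ (Q j) y : ℂ) = v j := by
    intro j
    rw [hy, inner_sum]
    simp only [inner_smul_right]
    conv_rhs => rw [← hGa]
    rw [Matrix.mulVec, dotProduct, hG]
    exact Finset.sum_congr rfl fun l _ => by simp [mul_comm]
  have hxy : (inner ℂ x y : ℂ) = star v ⬝ᵥ a := by
    rw [hy, inner_sum, dotProduct]
    refine Finset.sum_congr rfl fun j _ => ?_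
    rw [inner_smul_right]
    have h2 : (inner ℂ x (Q j) : ℂ) = (starRingEnd ℂ) (v j) := by
      rw [← hQx j, ← inner_conj_symm]
    rw [h2]
    simp [mul_comm]
  have hyx : (inner ℂ y x : ℂ) = inner ℂ y y := by
    have h0 : (inner ℂ y (x - y) : ℂ) = 0 := by
      rw [hy, sum_inner]
      refine Finset.sum_eq_zero fun j _ => ?_
      rw [inner_smul_left, inner_sub_right, hQx, hQy, sub_self, mul_zero]
    have h2 : (inner ℂ y x : ℂ) = inner ℂ y y + inner ℂ y (x - y) := by
      rw [inner_sub_right]; ring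
    rw [h2, h0, add_zero]
  have hform : star v ⬝ᵥ (G⁻¹ *ᵥ v) = ((‖y‖ ^ 2 : ℝ) : ℂ) := by
    rw [← ha, ← hxy, ← inner_conj_symm x y, hyx, inner_self_eq_norm_sq_to_K]
    simp [← Complex.ofReal_pow, Complex.conj_ofReal]
  have hineq : ‖y‖ ^ 2 ≤ ‖x‖ ^ 2 := by
    have hcs : ‖(inner ℂ x y : ℂ)‖ ≤ ‖x‖ * ‖y‖ := norm_inner_le_norm x y
    rw [hxy, ha, hform] at hcs
    rw [Complex.norm_real, Real.norm_of_nonneg (by positivity)] at hcs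
    nlinarith [norm_nonneg x, norm_nonneg y]
  rw [hmain, hform]
  refine ⟨Complex.ofReal_im _, ?_, Complex.ofReal_im _, ?_, ?_⟩
  · rw [Complex.ofReal_re]; positivity
  · rw [Complex.ofReal_re]; positivity
  · rw [Complex.ofReal_re, Complex.ofReal_re]; exact hineq
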